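/- A Schwartz function $\varphi \in \mathcal{S}(\mathbb{R})$ satisfies $\int_{\mathbb{R}} \varphi(x) x^k\,dx = 0$ for all $k \in \mathbb{N}$ (i.e., $\varphi$ lies in the Lizorkin space $\mathcal{S}_0(\mathbb{R})$) if and only if for every $k \in \mathbb{N}$, $\lim_{\omega \to 0} \mathcal{F}\varphi(\omega) / |\omega|^k = 0$. -/

import Mathlib

open MeasureTheory

/-- The Fourier transform `𝓕φ(ω) = (2π)^{-1/2} ∫ φ(x) e^{-i x ω} dx` of a real function. -/
noncomputable def FT (f : ℝ → ℝ) (ω : ℝ) : ℂ :=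
  (Real.sqrt (2 * Real.pi) : ℂ)⁻¹ *
    ∫ x : ℝ, (f x : ℂ) * Complex.exp (-(Complex.I * (x : ℂ) * (ω : ℂ)))

lemma expBound : ∀ (n : ℕ) (t : ℝ),
    ‖Complex.exp (Complex.I * t) -
      ∑ j ∈ Finset.range n, (Complex.I * t) ^ j / (j.factorial : ℂ)‖ ≤ |t| ^ n := by
  intro n
  induction n with
  | zero => intro t; simp [Complex.norm_exp]
  | succ n ih =>
    intro t
    set F : ℝ → ℂ := fun s => Complex.exp (Complex.I * s) -
      ∑ j ∈ Finset.range (n + 1), (Complex.I * s) ^ j / (j.factorial : ℂ) with hF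
    set G : ℝ → ℂ := fun s => Complex.I * (Complex.exp (Complex.I * s) -
      ∑ j ∈ Finset.range n, (Complex.I * s) ^ j / (j.factorial : ℂ)) with hG
    have hderiv : ∀ s : ℝ, HasDerivAt F (G s) s := by
      intro s
      have hs : HasDerivAt (fun s : ℝ => Complex.I * (s : ℂ)) Complex.I s := by
        simpa using (Complex.ofRealCLM.hasDerivAt (x := s)).const_mul Complex.I
      have hexp := hs.cexp
      have hsum : HasDerivAt
          (fun s : ℝ => ∑ j ∈ Finset.range (n + 1), (Complex.I * (s : ℂ)) ^ j / (j.factorial : ℂ))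
          (∑ j ∈ Finset.range (n + 1),
            ((j : ℂ) * (Complex.I * s) ^ (j - 1) * Complex.I) / (j.factorial : ℂ)) s := by
        refine HasDerivAt.fun_sum fun j _ => HasDerivAt.div_const ?_ _
        have hp : HasDerivAt (fun z : ℂ => (Complex.I * z) ^ j)
            ((j : ℂ) * (Complex.I * (s:ℂ)) ^ (j - 1) * Complex.I) (s : ℂ) := by
          simpa using ((hasDerivAt_id ((s:ℝ):ℂ)).const_mul Complex.I).fun_pow j
        exact hp.comp_ofReal
      have key : (∑ j ∈ Finset.range (n + 1),
            ((j : ℂ) * (Complex.I * s) ^ (j - 1) * Complex.I) / (j.factorial : ℂ)) =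
          Complex.I * ∑ j ∈ Finset.range n, (Complex.I * s) ^ j / (j.factorial : ℂ) := by
        rw [Finset.sum_range_succ', Finset.mul_sum]
        simp only [Nat.cast_zero, zero_mul, zero_div, add_zero]
        refine Finset.sum_congr rfl fun i _ => ?_
        rw [Nat.add_sub_cancel, Nat.factorial_succ]
        have h1 : ((i : ℂ) + 1) ≠ 0 := Nat.cast_add_one_ne_zero i
        have h2 : ((i.factorial : ℂ)) ≠ 0 := Nat.cast_ne_zero.2 i.factorial_ne_zero
        push_cast
        field_simp
      have := hexp.fun_sub hsum
      rw [key] at this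
      convert this using 1
      · rfl
      simp only [hG]
      ring
    have hcont : Continuous G := by
      apply Continuous.mul continuous_const
      exact (Complex.continuous_exp.comp (continuous_const.mul Complex.continuous_ofReal)).sub
        (continuous_finset_sum _ fun j _ =>
          ((continuous_const.mul Complex.continuous_ofReal).pow j).div_const _)
    have hFTC := intervalIntegral.integral_eq_sub_of_hasDerivAt
      (f := F) (f' := G) (a := 0) (b := t) (fun s _ => hderiv s)
      (hcont.intervalIntegrable 0 t)
    have hF0 : F 0 = 0 := by
      simp only [hF, Complex.ofReal_zero, mul_zero, Complex.exp_zero]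
      rw [Finset.sum_range_succ']
      simp
    have hFt : F t = ∫ s in (0:ℝ)..t, G s := by rw [hFTC, hF0, sub_zero]
    have hle : ‖F t‖ ≤ |t| ^ n * |t - 0| := by
      rw [hFt]
      apply intervalIntegral.norm_integral_le_of_norm_le_const
      intro s hs
      have hsle : |s| ≤ |t| := by
        rcases hs with ⟨h1, h2⟩
        have hmax : max 0 t ≤ |t| := max_le (abs_nonneg t) (le_abs_self t)
        have hmin : -|t| ≤ min 0 t := le_min (neg_nonpos.2 (abs_nonneg t)) (neg_abs_le t)
        exact abs_le.2 ⟨le_trans hmin h1.le, le_trans h2 hmax⟩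
      have : ‖G s‖ = ‖Complex.exp (Complex.I * s) -
          ∑ j ∈ Finset.range n, (Complex.I * s) ^ j / (j.factorial : ℂ)‖ := by
        rw [hG, norm_mul, Complex.norm_I, one_mul]
      rw [this]
      exact le_trans (ih s) (pow_le_pow_left₀ (abs_nonneg s) hsle n)
    calc ‖F t‖ ≤ |t| ^ n * |t - 0| := hle
      _ = |t| ^ (n + 1) := by rw [sub_zero, pow_succ]

lemma int_pow (φ : SchwartzMap ℝ ℝ) (j : ℕ) :
    Integrable (fun x : ℝ => (φ x : ℂ) * (x : ℂ) ^ j) := by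
  refine (φ.integrable_pow_mul volume j).mono' ?_ ?_
  · exact ((Complex.continuous_ofReal.comp φ.continuous).mul
      (Complex.continuous_ofReal.pow j)).aestronglyMeasurable
  · filter_upwards with x
    rw [norm_mul, norm_pow, Complex.norm_real, Complex.norm_real]
    exact (mul_comm _ _).le

lemma int_exp (φ : SchwartzMap ℝ ℝ) (ω : ℝ) :
    Integrable (fun x : ℝ => (φ x : ℂ) * Complex.exp (-(Complex.I * x * ω))) := by
  refine φ.integrable.norm.mono' ?_ ?_
  · exact ((Complex.continuous_ofReal.comp φ.continuous).mul
      (Complex.continuous_exp.comp (by continuity))).aestronglyMeasurable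
  · filter_upwards with x
    rw [norm_mul, Complex.norm_real, Complex.norm_exp]
    simp

lemma keyBound (φ : SchwartzMap ℝ ℝ) (n : ℕ) (ω : ℝ) :
    ‖(∫ x : ℝ, (φ x : ℂ) * Complex.exp (-(Complex.I * x * ω))) -
        ∑ j ∈ Finset.range n,
          ((-Complex.I * ω) ^ j / (j.factorial : ℂ)) * ((∫ x : ℝ, φ x * x ^ j : ℝ) : ℂ)‖ ≤
      |ω| ^ n * ∫ x : ℝ, ‖x‖ ^ n * ‖φ x‖ := by
  have hInt2 : ∀ j : ℕ, Integrable
      (fun x : ℝ => ((-Complex.I * ω) ^ j / (j.factorial : ℂ)) * ((φ x : ℂ) * (x : ℂ) ^ j)) :=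
    fun j => (int_pow φ j).const_mul _
  have hm : ∀ j : ℕ, ((∫ x : ℝ, φ x * x ^ j : ℝ) : ℂ) = ∫ x : ℝ, (φ x : ℂ) * (x : ℂ) ^ j := by
    intro j
    rw [show ((∫ x : ℝ, φ x * x ^ j : ℝ) : ℂ) = ∫ x : ℝ, ((φ x * x ^ j : ℝ) : ℂ) from
      integral_ofReal.symm]
    exact integral_congr_ae (Filter.Eventually.of_forall fun x => by push_cast; ring)
  have hsplit : (∫ x : ℝ, (φ x : ℂ) * Complex.exp (-(Complex.I * x * ω))) -
      ∑ j ∈ Finset.range n,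
        ((-Complex.I * ω) ^ j / (j.factorial : ℂ)) * ((∫ x : ℝ, φ x * x ^ j : ℝ) : ℂ) =
      ∫ x : ℝ, (φ x : ℂ) * (Complex.exp (Complex.I * ((-(x * ω) : ℝ) : ℂ)) -
        ∑ j ∈ Finset.range n, (Complex.I * ((-(x * ω) : ℝ) : ℂ)) ^ j / (j.factorial : ℂ)) := by
    have : ∑ j ∈ Finset.range n,
        ((-Complex.I * ω) ^ j / (j.factorial : ℂ)) * ((∫ x : ℝ, φ x * x ^ j : ℝ) : ℂ) =
        ∫ x : ℝ, ∑ j ∈ Finset.range n,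
          ((-Complex.I * ω) ^ j / (j.factorial : ℂ)) * ((φ x : ℂ) * (x : ℂ) ^ j) := by
      calc ∑ j ∈ Finset.range n,
            ((-Complex.I * ω) ^ j / (j.factorial : ℂ)) * ((∫ x : ℝ, φ x * x ^ j : ℝ) : ℂ) =
          ∑ j ∈ Finset.range n, ∫ x : ℝ,
            ((-Complex.I * ω) ^ j / (j.factorial : ℂ)) * ((φ x : ℂ) * (x : ℂ) ^ j) :=
          Finset.sum_congr rfl fun j _ => by rw [hm j, ← integral_const_mul]
        _ = _ := (integral_finset_sum _ fun j _ => hInt2 j).symm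
    rw [this, ← integral_sub (int_exp φ ω) (integrable_finset_sum _ fun j _ => hInt2 j)]
    refine integral_congr_ae (Filter.Eventually.of_forall fun x => ?_)
    dsimp only
    have harg : Complex.I * ((-(x * ω) : ℝ) : ℂ) = -Complex.I * ω * x := by push_cast; ring
    have hexp : -(Complex.I * (x : ℂ) * (ω : ℂ)) = Complex.I * ((-(x * ω) : ℝ) : ℂ) := by
      push_cast; ring
    rw [hexp, mul_sub, Finset.mul_sum]
    congr 1
    refine Finset.sum_congr rfl fun j _ => ?_
    rw [harg, mul_pow]
    ring
  rw [hsplit]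
  have hIntBound : Integrable (fun x : ℝ => |ω| ^ n * (‖x‖ ^ n * ‖φ x‖)) :=
    (φ.integrable_pow_mul volume n).const_mul _
  calc ‖_‖ ≤ ∫ x : ℝ, |ω| ^ n * (‖x‖ ^ n * ‖φ x‖) := by
        refine norm_integral_le_of_norm_le hIntBound ?_
        filter_upwards with x
        rw [norm_mul, Complex.norm_real]
        calc ‖φ x‖ * ‖_‖ ≤ ‖φ x‖ * |(-(x * ω))| ^ n := by
              exact mul_le_mul_of_nonneg_left (expBound n (-(x * ω))) (norm_nonneg _)
          _ = |ω| ^ n * (‖x‖ ^ n * ‖φ x‖) := by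
              rw [abs_neg, abs_mul, mul_pow, Real.norm_eq_abs, Real.norm_eq_abs]
              ring
    _ = |ω| ^ n * ∫ x : ℝ, ‖x‖ ^ n * ‖φ x‖ := integral_const_mul _ _

/-- a Schwartz function `φ ∈ S(ℝ)` has all moments vanishing (i.e. lies in the
Lizorkin space `S₀(ℝ)`) if and only if `𝓕φ(ω)/|ω|^k → 0` as `ω → 0`, for every `k ∈ ℕ`. -/
theorem stmt_7 (φ : SchwartzMap ℝ ℝ) :
    (∀ k : ℕ, ∫ x : ℝ, φ x * x ^ k = 0) ↔
    (∀ k : ℕ, Filter.Tendsto (fun ω : ℝ => FT (fun x => φ x) ω / ((|ω| ^ k : ℝ) : ℂ))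
      (nhdsWithin 0 {(0 : ℝ)}ᶜ) (nhds 0)) := by
  have hc : (0 : ℝ) < Real.sqrt (2 * Real.pi) :=
    Real.sqrt_pos.2 (by positivity)
  have hc0 : ((Real.sqrt (2 * Real.pi) : ℝ) : ℂ) ≠ 0 := by
    exact_mod_cast hc.ne'
  have hFT : ∀ ω : ℝ, FT (fun x => φ x) ω = (Real.sqrt (2 * Real.pi) : ℂ)⁻¹ *
      ∫ x : ℝ, (φ x : ℂ) * Complex.exp (-(Complex.I * x * ω)) := fun ω => rfl
  constructor
  · intro h k
    set C : ℝ := ∫ x : ℝ, ‖x‖ ^ (k + 1) * ‖φ x‖ with hC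
    have hCnn : 0 ≤ C := integral_nonneg fun x => by positivity
    have hg : ∀ ω : ℝ, ‖∫ x : ℝ, (φ x : ℂ) * Complex.exp (-(Complex.I * x * ω))‖ ≤
        |ω| ^ (k + 1) * C := by
      intro ω
      have := keyBound φ (k + 1) ω
      simpa [h, hC] using this
    have hev : ∀ᶠ ω in nhdsWithin 0 {(0 : ℝ)}ᶜ,
        ‖FT (fun x => φ x) ω / ((|ω| ^ k : ℝ) : ℂ)‖ ≤
          ((Real.sqrt (2 * Real.pi))⁻¹ * C) * |ω| := by
      filter_upwards [self_mem_nhdsWithin] with ω hω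
      have hωne : ω ≠ 0 := hω
      have h2 : (0 : ℝ) < |ω| ^ k := pow_pos (abs_pos.2 hωne) k
      have hnorm : ‖FT (fun x => φ x) ω / ((|ω| ^ k : ℝ) : ℂ)‖ =
          (Real.sqrt (2 * Real.pi))⁻¹ *
            ‖∫ x : ℝ, (φ x : ℂ) * Complex.exp (-(Complex.I * x * ω))‖ / |ω| ^ k := by
        rw [hFT, norm_div, norm_mul, norm_inv, Complex.norm_real, Complex.norm_real, Real.norm_eq_abs,
          Real.norm_eq_abs, abs_of_pos hc, abs_of_pos h2]
      rw [hnorm]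
      calc (Real.sqrt (2 * Real.pi))⁻¹ *
            ‖∫ x : ℝ, (φ x : ℂ) * Complex.exp (-(Complex.I * x * ω))‖ / |ω| ^ k ≤
          (Real.sqrt (2 * Real.pi))⁻¹ * (|ω| ^ (k + 1) * C) / |ω| ^ k := by
            gcongr
            exact hg ω
        _ = ((Real.sqrt (2 * Real.pi))⁻¹ * C) * |ω| := by
            rw [pow_succ]
            field_simp
    have hlim : Filter.Tendsto (fun ω : ℝ => ((Real.sqrt (2 * Real.pi))⁻¹ * C) * |ω|)
        (nhdsWithin 0 {(0 : ℝ)}ᶜ) (nhds 0) := by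
      have h0 : Filter.Tendsto (fun ω : ℝ => ((Real.sqrt (2 * Real.pi))⁻¹ * C) * |ω|)
          (nhds 0) (nhds 0) := by
        simpa using (continuous_abs.tendsto (0 : ℝ)).const_mul ((Real.sqrt (2 * Real.pi))⁻¹ * C)
      exact h0.mono_left nhdsWithin_le_nhds
    exact squeeze_zero_norm' hev hlim
  · intro h k
    induction k using Nat.strong_induction_on with
    | _ k ih =>
      set C : ℝ := ∫ x : ℝ, ‖x‖ ^ (k + 1) * ‖φ x‖ with hC
      set A : ℂ := ((-Complex.I) ^ k / (k.factorial : ℂ)) * ((∫ x : ℝ, φ x * x ^ k : ℝ) : ℂ)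
        with hA
      have hbound : ∀ ω : ℝ,
          ‖(∫ x : ℝ, (φ x : ℂ) * Complex.exp (-(Complex.I * x * ω))) - A * (ω : ℂ) ^ k‖ ≤
            |ω| ^ (k + 1) * C := by
        intro ω
        have hkb := keyBound φ (k + 1) ω
        have hsum : (∑ j ∈ Finset.range (k + 1),
            ((-Complex.I * ω) ^ j / (j.factorial : ℂ)) * ((∫ x : ℝ, φ x * x ^ j : ℝ) : ℂ)) =
            A * (ω : ℂ) ^ k := by
          rw [Finset.sum_range_succ, Finset.sum_eq_zero fun j hj => by
            rw [ih j (Finset.mem_range.1 hj)]; simp, zero_add, hA, mul_pow]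
          ring
        rwa [hsum] at hkb
      have hsub : Set.Ioi (0 : ℝ) ⊆ {(0 : ℝ)}ᶜ := fun x hx => ne_of_gt hx
      have h1 : Filter.Tendsto
          (fun ω : ℝ => (∫ x : ℝ, (φ x : ℂ) * Complex.exp (-(Complex.I * x * ω))) /
            ((|ω| ^ k : ℝ) : ℂ)) (nhdsWithin 0 (Set.Ioi 0)) (nhds 0) := by
        have h0 := ((h k).mono_left (nhdsWithin_mono 0 hsub)).const_mul
          ((Real.sqrt (2 * Real.pi) : ℝ) : ℂ)
        rw [mul_zero] at h0
        refine h0.congr fun ω => ?_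
        rw [hFT, mul_div_assoc, ← mul_assoc, mul_inv_cancel₀ hc0, one_mul]
      have h2 : Filter.Tendsto
          (fun ω : ℝ => ((∫ x : ℝ, (φ x : ℂ) * Complex.exp (-(Complex.I * x * ω))) -
            A * (ω : ℂ) ^ k) / ((|ω| ^ k : ℝ) : ℂ)) (nhdsWithin 0 (Set.Ioi 0)) (nhds 0) := by
        refine squeeze_zero_norm' (a := fun ω : ℝ => C * |ω|) ?_ ?_
        · filter_upwards [self_mem_nhdsWithin] with ω hω
          have hωpos : (0 : ℝ) < ω := hω
          have hk : (0 : ℝ) < |ω| ^ k := pow_pos (abs_pos.2 hωpos.ne') k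
          rw [norm_div, Complex.norm_real, Real.norm_eq_abs, abs_of_pos hk]
          calc ‖(∫ x : ℝ, (φ x : ℂ) * Complex.exp (-(Complex.I * x * ω))) -
                A * (ω : ℂ) ^ k‖ / |ω| ^ k ≤ (|ω| ^ (k + 1) * C) / |ω| ^ k := by
                gcongr
                exact hbound ω
            _ = C * |ω| := by rw [pow_succ]; field_simp
        · have h0 : Filter.Tendsto (fun ω : ℝ => C * |ω|) (nhds 0) (nhds 0) := by
            simpa using (continuous_abs.tendsto (0 : ℝ)).const_mul C
          exact h0.mono_left (le_trans (nhdsWithin_mono 0 hsub) nhdsWithin_le_nhds)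
      have h3 : Filter.Tendsto (fun ω : ℝ => (A * (ω : ℂ) ^ k) / ((|ω| ^ k : ℝ) : ℂ))
          (nhdsWithin 0 (Set.Ioi 0)) (nhds 0) := by
        have := h1.sub h2
        rw [sub_zero] at this
        refine this.congr fun ω => ?_
        rw [← sub_div, sub_sub_cancel]
      have h4 : (fun ω : ℝ => (A * (ω : ℂ) ^ k) / ((|ω| ^ k : ℝ) : ℂ)) =ᶠ[nhdsWithin 0
          (Set.Ioi (0 : ℝ))] fun _ => A := by
        filter_upwards [self_mem_nhdsWithin] with ω hω
        have hωpos : (0 : ℝ) < ω := hω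
        rw [abs_of_pos hωpos, Complex.ofReal_pow]
        have : ((ω : ℝ) : ℂ) ^ k ≠ 0 := pow_ne_zero _ (by exact_mod_cast hωpos.ne')
        field_simp
      have h5 : Filter.Tendsto (fun _ : ℝ => A) (nhdsWithin 0 (Set.Ioi (0 : ℝ))) (nhds 0) :=
        Filter.Tendsto.congr' h4 h3
      have hA0 : A = 0 := tendsto_nhds_unique tendsto_const_nhds h5
      have hI : ((-Complex.I) ^ k / (k.factorial : ℂ)) ≠ 0 := by
        apply div_ne_zero
        · exact pow_ne_zero _ (neg_ne_zero.2 Complex.I_ne_zero)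
        · exact Nat.cast_ne_zero.2 k.factorial_ne_zero
      have : ((∫ x : ℝ, φ x * x ^ k : ℝ) : ℂ) = 0 := by
        rcases mul_eq_zero.1 (hA ▸ hA0) with h' | h'
        · exact absurd h' hI
        · exact h'
      exact_mod_cast this
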